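/- arXiv:1006.3117 — 2 statements merged into one kernel-verified Lean document; each statement's English description precedes it below -/
import Mathlib

section
/- Let T₁ : H₀ ⇢ H₁ and T₂ : H₁ ⇢ H₂ be closed densely-defined Hilbert space operators with range(T₁) ⊆ ker(T₂). If every element of ker(T₂) can be written as f + T₁g with f ∈ ker(T₂) ∩ ker(T₁*), then range(T₁) is closed in H₁. -/
/-- If `T₁ : H₀ ⇢ H₁`, `T₂ : H₁ ⇢ H₂` are closed densely-defined operators
with `range T₁ ⊆ ker T₂`, and every element of `ker T₂` can be written as `f + T₁ g` with
`f ∈ ker T₂ ∩ ker T₁*`, then `range T₁` is closed in `H₁`. -/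
theorem range_closed_of_harmonic_representation
    {H₀ H₁ H₂ : Type*}
    [NormedAddCommGroup H₀] [InnerProductSpace ℂ H₀] [CompleteSpace H₀]
    [NormedAddCommGroup H₁] [InnerProductSpace ℂ H₁] [CompleteSpace H₁]
    [NormedAddCommGroup H₂] [InnerProductSpace ℂ H₂] [CompleteSpace H₂]
    (T₁ : H₀ →ₗ.[ℂ] H₁) (T₂ : H₁ →ₗ.[ℂ] H₂)
    (hT₁ : T₁.IsClosed) (hT₂ : T₂.IsClosed)
    (hd₁ : Dense (T₁.domain : Set H₀)) (hd₂ : Dense (T₂.domain : Set H₁))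
    (hcomplex : ∀ x : T₁.domain, ∃ h : T₁ x ∈ T₂.domain, T₂ ⟨T₁ x, h⟩ = 0)
    (hsurj : ∀ u : T₂.domain, T₂ u = 0 →
      ∃ (f : H₁) (g : T₁.domain),
        (∃ hf₂ : f ∈ T₂.domain, T₂ ⟨f, hf₂⟩ = 0) ∧
        (∃ hf₁ : f ∈ T₁.adjoint.domain, T₁.adjoint ⟨f, hf₁⟩ = 0) ∧
        (u : H₁) = f + T₁ g) :
    IsClosed (Set.range fun x : T₁.domain => T₁ x) := by
  -- K = ker T₂ as a set
  set K : Set H₁ := {u | ∃ h : u ∈ T₂.domain, T₂ ⟨u, h⟩ = 0} with hK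
  -- W = orthogonal of ker T₁* as a set
  set W : Set H₁ := {v | ∀ f : H₁, ∀ hf : f ∈ T₁.adjoint.domain,
      T₁.adjoint ⟨f, hf⟩ = 0 → (inner ℂ f v : ℂ) = 0} with hW
  have hKclosed : IsClosed K := by
    apply isClosed_of_closure_subset
    intro u hu
    rcases mem_closure_iff_seq_limit.mp hu with ⟨x, hxK, hxlim⟩
    choose hdom hzero using hxK
    have hgraph : (u, (0 : H₂)) ∈ T₂.graph := by
      have : Filter.Tendsto (fun n => ((x n : H₁), T₂ ⟨x n, hdom n⟩)) Filter.atTop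
          (nhds (u, 0)) := by
        have : (fun n => ((x n : H₁), T₂ ⟨x n, hdom n⟩)) = fun n => (x n, 0) := by
          funext n; simp [hzero n]
        rw [this]
        exact hxlim.prodMk_nhds tendsto_const_nhds
      refine hT₂.mem_of_tendsto this (Filter.Eventually.of_forall fun n => ?_)
      exact T₂.mem_graph ⟨x n, hdom n⟩
    rcases T₂.mem_graph_iff.mp hgraph with ⟨y, hy1, hy2⟩
    have hy1' : (y : H₁) = u := hy1
    have hy2' : T₂ y = 0 := hy2
    refine ⟨hy1' ▸ y.2, ?_⟩
    have heq : (⟨u, hy1' ▸ y.2⟩ : T₂.domain) = y := Subtype.ext hy1'.symm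
    rw [heq, hy2']
  have hWclosed : IsClosed W := by
    have : W = ⋂ (f : H₁) (hf : f ∈ T₁.adjoint.domain) (_ : T₁.adjoint ⟨f, hf⟩ = 0),
        {v : H₁ | (inner ℂ f v : ℂ) = 0} := by
      ext v; simp [hW, Set.mem_iInter]
    rw [this]
    refine isClosed_iInter fun f => isClosed_iInter fun hf => isClosed_iInter fun _ => ?_
    exact isClosed_eq (Continuous.inner continuous_const continuous_id) continuous_const
  have hfa := T₁.adjoint_isFormalAdjoint hd₁
  have key : (Set.range fun x : T₁.domain => T₁ x) = K ∩ W := by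
    ext u
    constructor
    · rintro ⟨x, rfl⟩
      refine ⟨hcomplex x, fun f hf hf0 => ?_⟩
      have := hfa ⟨f, hf⟩ x
      rw [hf0] at this
      simpa using this.symm
    · rintro ⟨⟨hu, hu0⟩, huW⟩
      rcases hsurj ⟨u, hu⟩ hu0 with ⟨f, g, _, ⟨hf₁, hf₁0⟩, hdecomp⟩
      have hdecomp' : u = f + T₁ g := hdecomp
      have hfT : (inner ℂ f (T₁ g) : ℂ) = 0 := by
        have := hfa ⟨f, hf₁⟩ g
        rw [hf₁0] at this
        simpa using this.symm
      have hfu : (inner ℂ f u : ℂ) = 0 := huW f hf₁ hf₁0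
      have : (inner ℂ f f : ℂ) = 0 := by
        have := hfu
        rw [hdecomp', inner_add_right, hfT, add_zero] at this
        exact this
      have hf0 : f = 0 := inner_self_eq_zero.mp this
      exact ⟨g, by simp [hdecomp', hf0]⟩
  rw [key]
  exact hKclosed.inter hWclosed
end

section
/- Let T₁ : H₁ ⇢ K₁ and T₂ : H₂ ⇢ K₂ be closed densely-defined operators on Hilbert spaces. Then the algebraic tensor product operator T₁ ⊗ T₂, defined on Dom(T₁) ⊗ Dom(T₂) ⊆ H₁ ⊗̂ H₂ by (T₁⊗T₂)(x⊗y) = T₁x ⊗ T₂y, is closable as an operator from the Hilbert tensor product H₁ ⊗̂ H₂ to K₁ ⊗̂ K₂. -/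
open scoped InnerProductSpace
open LinearPMap

private lemma adjoint_domain_dense
    {H K : Type*}
    [NormedAddCommGroup H] [InnerProductSpace ℂ H] [CompleteSpace H]
    [NormedAddCommGroup K] [InnerProductSpace ℂ K] [CompleteSpace K]
    (T : H →ₗ.[ℂ] K) (hc : T.IsClosed) (hd : Dense (T.domain : Set H)) :
    Dense ((T†.domain : Submodule ℂ K) : Set K) := by
  rw [Submodule.dense_iff_topologicalClosure_eq_top,
      Submodule.topologicalClosure_eq_top_iff, Submodule.eq_bot_iff]
  intro z hz
  -- the rotated-graph map
  set e : (H × K) →ₗ[ℂ] WithLp 2 (K × H) :=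
    ((WithLp.linearEquiv 2 ℂ (K × H)).symm.toLinearMap).comp
      ((LinearMap.snd ℂ H K).prod (-(LinearMap.fst ℂ H K))) with he
  have he_apply : ∀ p : H × K, e p = (WithLp.equiv 2 (K × H)).symm (p.2, -p.1) := fun p => rfl
  set G : Submodule ℂ (WithLp 2 (K × H)) := T.graph.map e with hG
  set Ψ : WithLp 2 (K × H) → H × K :=
    fun q => (-(WithLp.equiv 2 (K × H) q).2, (WithLp.equiv 2 (K × H) q).1) with hΨdef
  have hΨcont : Continuous Ψ := by
    have h1 : Continuous fun q : WithLp 2 (K × H) => WithLp.equiv 2 (K × H) q :=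
      (WithLp.prodContinuousLinearEquiv 2 ℂ K H).continuous
    fun_prop
  have hset : (G : Set (WithLp 2 (K × H))) = Ψ ⁻¹' (T.graph : Set (H × K)) := by
    ext q
    constructor
    · rintro ⟨p, hp, rfl⟩
      simpa [he_apply, Ψ] using hp
    · intro hq
      refine ⟨Ψ q, hq, ?_⟩
      simp only [he_apply, Ψ, neg_neg]
      rfl
  have hGclosed : IsClosed (G : Set (WithLp 2 (K × H))) := by
    rw [hset]; exact hc.preimage hΨcont
  have hGoo : Gᗮᗮ = G := by
    rw [Submodule.orthogonal_orthogonal_eq_closure]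
    exact SetLike.coe_injective (by rw [Submodule.topologicalClosure_coe, hGclosed.closure_eq])
  set p : WithLp 2 (K × H) := (WithLp.equiv 2 (K × H)).symm (z, 0) with hp
  have hpmem : p ∈ Gᗮᗮ := by
    rw [Submodule.mem_orthogonal]
    intro q hq
    rw [Submodule.mem_orthogonal] at hq
    have hkey : ∀ x : T.domain, ⟪T x, (WithLp.equiv 2 (K × H) q).1⟫_ℂ
        = ⟪(x : H), (WithLp.equiv 2 (K × H) q).2⟫_ℂ := by
      intro x
      have := hq (e ((x : H), T x)) ⟨_, T.mem_graph x, rfl⟩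
      rw [he_apply] at this
      simp only [WithLp.prod_inner_apply] at this
      simpa [inner_neg_left, add_neg_eq_zero] using this
    have hq1 : (WithLp.equiv 2 (K × H) q).1 ∈ T†.domain := by
      refine mem_adjoint_domain_of_exists _ ⟨(WithLp.equiv 2 (K × H) q).2, fun x => ?_⟩
      rw [← inner_conj_symm, ← hkey x, inner_conj_symm]
    rw [WithLp.prod_inner_apply]
    have h0 : ⟪(WithLp.equiv 2 (K × H) q).1, z⟫_ℂ = 0 := hz _ hq1
    simpa [hp] using h0
  rw [hGoo] at hpmem
  obtain ⟨⟨x, y⟩, hxy, hexy⟩ := hpmem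
  rw [he_apply] at hexy
  have : ((y, -x) : K × H) = (z, 0) := (WithLp.equiv 2 (K × H)).symm.injective hexy
  have hx0 : x = 0 := by have := congrArg Prod.snd this; simpa [neg_eq_zero] using this
  have hyz : y = z := congrArg Prod.fst this
  subst hx0; subst hyz
  exact T.graph_fst_eq_zero_snd hxy rfl

open scoped InnerProductSpace
open LinearPMap

private lemma tmul_norm {K₁ K₂ KT : Type*}
    [NormedAddCommGroup K₁] [InnerProductSpace ℂ K₁]
    [NormedAddCommGroup K₂] [InnerProductSpace ℂ K₂]
    [NormedAddCommGroup KT] [InnerProductSpace ℂ KT]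
    (tmulK : K₁ →ₗ[ℂ] K₂ →ₗ[ℂ] KT)
    (htmulK_inner : ∀ x z : K₁, ∀ y w : K₂,
      ⟪tmulK x y, tmulK z w⟫_ℂ = ⟪x, z⟫_ℂ * ⟪y, w⟫_ℂ)
    (x : K₁) (y : K₂) : ‖tmulK x y‖ = ‖x‖ * ‖y‖ := by
  have h0 := htmulK_inner x x y y
  rw [inner_self_eq_norm_sq_to_K, inner_self_eq_norm_sq_to_K,
    inner_self_eq_norm_sq_to_K] at h0
  have h' : (‖tmulK x y‖ : ℝ) ^ 2 = (‖x‖ * ‖y‖) ^ 2 := by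
    rw [mul_pow]; exact_mod_cast h0
  have := congrArg Real.sqrt h'
  rwa [Real.sqrt_sq (norm_nonneg _), Real.sqrt_sq (by positivity)] at this

private lemma dense_span_tmul {K₁ K₂ KT : Type*}
    [NormedAddCommGroup K₁] [InnerProductSpace ℂ K₁]
    [NormedAddCommGroup K₂] [InnerProductSpace ℂ K₂]
    [NormedAddCommGroup KT] [InnerProductSpace ℂ KT]
    (tmulK : K₁ →ₗ[ℂ] K₂ →ₗ[ℂ] KT)
    (htmulK_inner : ∀ x z : K₁, ∀ y w : K₂,
      ⟪tmulK x y, tmulK z w⟫_ℂ = ⟪x, z⟫_ℂ * ⟪y, w⟫_ℂ)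
    (htmulK_dense : Dense (Submodule.span ℂ
      {t : KT | ∃ (x : K₁) (y : K₂), t = tmulK x y} : Set KT))
    (D₁ : Submodule ℂ K₁) (D₂ : Submodule ℂ K₂)
    (hD₁ : Dense (D₁ : Set K₁)) (hD₂ : Dense (D₂ : Set K₂)) :
    Dense (Submodule.span ℂ
      {t : KT | ∃ u ∈ D₁, ∃ v ∈ D₂, t = tmulK u v} : Set KT) := by
  set S : Submodule ℂ KT := Submodule.span ℂ {t : KT | ∃ u ∈ D₁, ∃ v ∈ D₂, t = tmulK u v}
  -- continuity of the tensor map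
  have hB : Continuous fun p : K₁ × K₂ => tmulK p.1 p.2 := by
    let B : K₁ →L[ℂ] K₂ →L[ℂ] KT := LinearMap.mkContinuous₂ tmulK 1
      (fun a b => by rw [tmul_norm tmulK htmulK_inner, one_mul])
    exact B.continuous₂
  have hgen : ∀ x : K₁, ∀ y : K₂, tmulK x y ∈ closure (S : Set KT) := by
    intro x y
    have hmem : ((x, y) : K₁ × K₂) ∈ closure ((D₁ : Set K₁) ×ˢ (D₂ : Set K₂)) := by
      rw [closure_prod_eq, hD₁.closure_eq, hD₂.closure_eq]; trivial
    have hmaps : Set.MapsTo (fun p : K₁ × K₂ => tmulK p.1 p.2)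
        ((D₁ : Set K₁) ×ˢ (D₂ : Set K₂)) (S : Set KT) := by
      rintro ⟨u, v⟩ ⟨hu, hv⟩
      exact Submodule.subset_span ⟨u, hu, v, hv, rfl⟩
    show (fun p : K₁ × K₂ => tmulK p.1 p.2) (x, y) ∈ closure (S : Set KT)
    exact map_mem_closure (f := fun p : K₁ × K₂ => tmulK p.1 p.2) hB hmem hmaps
  have hle : Submodule.span ℂ {t : KT | ∃ (x : K₁) (y : K₂), t = tmulK x y}
      ≤ S.topologicalClosure := by
    rw [Submodule.span_le]
    rintro t ⟨x, y, rfl⟩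
    exact hgen x y
  have : Dense (S.topologicalClosure : Set KT) :=
    htmulK_dense.mono hle
  rwa [Submodule.topologicalClosure_coe, dense_closure] at this


/-- Let `T₁ : H₁ ⇢ K₁`, `T₂ : H₂ ⇢ K₂` be closed densely-defined Hilbert
space operators.  Let `HT = H₁ ⊗̂ H₂` and `KT = K₁ ⊗̂ K₂` be Hilbert tensor products,
i.e. Hilbert spaces equipped with bilinear maps `tmulH`, `tmulK` with dense span such that
`⟪x ⊗ y, z ⊗ w⟫ = ⟪x,z⟫ ⟪y,w⟫`.  Then the algebraic tensor product operator `T₁ ⊗ T₂`,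
defined on `Dom T₁ ⊗ Dom T₂` by `(T₁ ⊗ T₂)(x ⊗ y) = T₁x ⊗ T₂y`, is closable: if `(0, w)`
lies in the closure of its graph, then `w = 0`. -/
theorem tensor_product_operator_closable
    {H₁ H₂ K₁ K₂ HT KT : Type*}
    [NormedAddCommGroup H₁] [InnerProductSpace ℂ H₁] [CompleteSpace H₁]
    [NormedAddCommGroup H₂] [InnerProductSpace ℂ H₂] [CompleteSpace H₂]
    [NormedAddCommGroup K₁] [InnerProductSpace ℂ K₁] [CompleteSpace K₁]
    [NormedAddCommGroup K₂] [InnerProductSpace ℂ K₂] [CompleteSpace K₂]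
    [NormedAddCommGroup HT] [InnerProductSpace ℂ HT] [CompleteSpace HT]
    [NormedAddCommGroup KT] [InnerProductSpace ℂ KT] [CompleteSpace KT]
    (tmulH : H₁ →ₗ[ℂ] H₂ →ₗ[ℂ] HT)
    (htmulH_inner : ∀ x z : H₁, ∀ y w : H₂,
      ⟪tmulH x y, tmulH z w⟫_ℂ = ⟪x, z⟫_ℂ * ⟪y, w⟫_ℂ)
    (htmulH_dense : Dense (Submodule.span ℂ
      {t : HT | ∃ (x : H₁) (y : H₂), t = tmulH x y} : Set HT))
    (tmulK : K₁ →ₗ[ℂ] K₂ →ₗ[ℂ] KT)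
    (htmulK_inner : ∀ x z : K₁, ∀ y w : K₂,
      ⟪tmulK x y, tmulK z w⟫_ℂ = ⟪x, z⟫_ℂ * ⟪y, w⟫_ℂ)
    (htmulK_dense : Dense (Submodule.span ℂ
      {t : KT | ∃ (x : K₁) (y : K₂), t = tmulK x y} : Set KT))
    (T₁ : H₁ →ₗ.[ℂ] K₁) (T₂ : H₂ →ₗ.[ℂ] K₂)
    (hT₁ : T₁.IsClosed) (hT₂ : T₂.IsClosed)
    (hd₁ : Dense (T₁.domain : Set H₁)) (hd₂ : Dense (T₂.domain : Set H₂)) :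
    ∀ w : KT,
      ((0 : HT), w) ∈ closure
        (Submodule.span ℂ {p : HT × KT | ∃ (x : T₁.domain) (y : T₂.domain),
          p = (tmulH x y, tmulK (T₁ x) (T₂ y))} : Set (HT × KT)) →
      w = 0 := by
  intro w hw
  have hD₁ : Dense ((T₁†.domain : Submodule ℂ K₁) : Set K₁) := adjoint_domain_dense T₁ hT₁ hd₁
  have hD₂ : Dense ((T₂†.domain : Submodule ℂ K₂) : Set K₂) := adjoint_domain_dense T₂ hT₂ hd₂
  -- Step 1: w is orthogonal to tmulK u v for u, v in the adjoint domains
  have key : ∀ u ∈ T₁†.domain, ∀ v ∈ T₂†.domain, ⟪tmulK u v, w⟫_ℂ = 0 := by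
    intro u hu v hv
    set F : (HT × KT) →L[ℂ] ℂ :=
      ((innerSL ℂ (tmulK u v)).comp (ContinuousLinearMap.snd ℂ HT KT)) -
      ((innerSL ℂ (tmulH (T₁† ⟨u, hu⟩) (T₂† ⟨v, hv⟩))).comp
        (ContinuousLinearMap.fst ℂ HT KT)) with hF
    have hker : (Submodule.span ℂ {p : HT × KT | ∃ (x : T₁.domain) (y : T₂.domain),
        p = (tmulH x y, tmulK (T₁ x) (T₂ y))} : Set (HT × KT))
        ⊆ (F.ker : Set (HT × KT)) := by
      refine SetLike.coe_subset_coe.mpr (Submodule.span_le.mpr ?_)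
      rintro _ ⟨x, y, rfl⟩
      simp only [SetLike.mem_coe, LinearMap.mem_ker, ContinuousLinearMap.coe_coe]
      have : F (tmulH x y, tmulK (T₁ x) (T₂ y))
          = ⟪tmulK u v, tmulK (T₁ x) (T₂ y)⟫_ℂ
            - ⟪tmulH (T₁† ⟨u, hu⟩) (T₂† ⟨v, hv⟩), tmulH x y⟫_ℂ := rfl
      rw [this, htmulK_inner, htmulH_inner,
        adjoint_isFormalAdjoint hd₁ ⟨u, hu⟩ x, adjoint_isFormalAdjoint hd₂ ⟨v, hv⟩ y,
        sub_self]
    have hmem : ((0 : HT), w) ∈ (F.ker : Set (HT × KT)) :=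
      (F.isClosed_ker.closure_subset_iff.mpr hker) hw
    have : F ((0 : HT), w) = 0 := hmem
    have h2 : ⟪tmulK u v, w⟫_ℂ
        - ⟪tmulH (T₁† ⟨u, hu⟩) (T₂† ⟨v, hv⟩), (0 : HT)⟫_ℂ = 0 := this
    rwa [inner_zero_right, sub_zero] at h2
  -- Step 2: these vectors span a dense subspace
  have hdense := dense_span_tmul tmulK htmulK_inner htmulK_dense
    T₁†.domain T₂†.domain hD₁ hD₂
  -- Step 3: conclude w = 0
  have hZ : (Submodule.span ℂ
      {t : KT | ∃ u ∈ T₁†.domain, ∃ v ∈ T₂†.domain, t = tmulK u v} : Set KT)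
      ⊆ ((innerSL ℂ w).ker : Set KT) := by
    refine SetLike.coe_subset_coe.mpr (Submodule.span_le.mpr ?_)
    rintro _ ⟨u, hu, v, hv, rfl⟩
    simp only [SetLike.mem_coe, LinearMap.mem_ker, ContinuousLinearMap.coe_coe, innerSL_apply_apply]
    rw [← inner_conj_symm, key u hu v hv]; exact map_zero _
  have huniv : (Set.univ : Set KT) ⊆ ((innerSL ℂ w).ker : Set KT) := by
    rw [← hdense.closure_eq]
    exact (innerSL ℂ w).isClosed_ker.closure_subset_iff.mpr hZ
  have : ⟪w, w⟫_ℂ = 0 := huniv (Set.mem_univ w)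
  exact inner_self_eq_zero.mp this
end
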